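/- Let a : ℝ → ℝ be a differentiable function and let w : ℝ → ℝ be three times differentiable, satisfying the third-order equation w'''(t) + 2·a(t)·w'(t) + a'(t)·w(t) = 0 for all t. Then the quantity t ↦ w(t)·w''(t) − (1/2)·w'(t)² + a(t)·w(t)² is constant. -/

import Mathlib

/-- The third-order equation of maximal symmetry `w''' + 2a(t)w' + a'(t)w = 0`
has the first integral `w w'' − (1/2)(w')² + a(t)w²`. -/
theorem third_order_first_integral
    (a : ℝ → ℝ) (ha : Differentiable ℝ a)
    (w : ℝ → ℝ) (hw : Differentiable ℝ w)
    (hw' : Differentiable ℝ (deriv w)) (hw'' : Differentiable ℝ (deriv (deriv w)))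
    (heq : ∀ t, deriv (deriv (deriv w)) t + 2 * a t * deriv w t + deriv a t * w t = 0) :
    ∀ t, w t * deriv (deriv w) t - (1 / 2) * (deriv w t) ^ 2 + a t * (w t) ^ 2
        = w 0 * deriv (deriv w) 0 - (1 / 2) * (deriv w 0) ^ 2 + a 0 * (w 0) ^ 2 := by
  set F : ℝ → ℝ := fun t =>
    w t * deriv (deriv w) t - (1 / 2) * (deriv w t) ^ 2 + a t * (w t) ^ 2 with hF
  have key : ∀ t, HasDerivAt F 0 t := by
    intro t
    have h1 : HasDerivAt w (deriv w t) t := (hw t).hasDerivAt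
    have h2 : HasDerivAt (deriv w) (deriv (deriv w) t) t := (hw' t).hasDerivAt
    have h3 : HasDerivAt (deriv (deriv w)) (deriv (deriv (deriv w)) t) t :=
      (hw'' t).hasDerivAt
    have h4 : HasDerivAt a (deriv a t) t := (ha t).hasDerivAt
    have := ((h1.mul h3).sub ((hasDerivAt_const t (1/2:ℝ)).mul (h2.pow 2))).add
      (h4.mul (h1.pow 2))
    have this : HasDerivAt F _ t := this
    convert this using 1
    have h0 := heq t
    push_cast [Pi.pow_apply]
    linear_combination (-(w t)) * h0
  intro t
  have : F t = F 0 :=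
    is_const_of_deriv_eq_zero (fun x => (key x).differentiableAt)
      (fun x => (key x).deriv) t 0
  simpa [hF] using this
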